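/- No nontrivial Ockham algebra A with |A| even number of dual-space points forming an even g-cycle is quasi-primal; concretely: let X be a finite Ockham space whose map g is a single cycle of even length on X. Then there exist an Ockham space Y on a three-element chain u < v < w with g^Y(u) = w, g^Y(v) = v, g^Y(w) = u and jointly surjective Ockham-space morphisms φ₁, φ₂ : X → Y (continuous order-preserving maps commuting with g, i.e., φᵢ ∘ g^X = g^Y ∘ φᵢ) such that neither φ₁ nor φ₂ is surjective and the images φ₁(X) and φ₂(X) are not mutually incomparable. -/

import Mathlib

/-- Let `X` be a finite Ockham space whose order-reversing map `gX` is a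
single cycle of even length `m ≥ 2`. Then there is an Ockham-space structure
`gY` on the three-element chain `Fin 3` (with `gY 0 = 2`, `gY 1 = 1`,
`gY 2 = 0`) and jointly surjective Ockham-space morphisms
`φ₁, φ₂ : X → Fin 3`, neither of which is surjective, whose images are not
mutually incomparable. -/
theorem even_cycle_ockham_not_quasiprimal
    {X : Type*} [PartialOrder X] [Fintype X]
    (gX : X → X) (hg : ∀ x y : X, x ≤ y → gX y ≤ gX x)
    (a : X) (m : ℕ) (hm2 : 2 ≤ m) (hmeven : Even m)
    (horbit : ∀ x : X, ∃ n : ℕ, gX^[n] a = x)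
    (hper : gX^[m] a = a)
    (hleast : ∀ k : ℕ, 0 < k → k < m → gX^[k] a ≠ a) :
    ∃ (gY : Fin 3 → Fin 3) (φ₁ φ₂ : X → Fin 3),
      gY 0 = 2 ∧ gY 1 = 1 ∧ gY 2 = 0 ∧
      (∀ u v : Fin 3, u ≤ v → gY v ≤ gY u) ∧
      Monotone φ₁ ∧ Monotone φ₂ ∧
      (∀ x : X, φ₁ (gX x) = gY (φ₁ x)) ∧
      (∀ x : X, φ₂ (gX x) = gY (φ₂ x)) ∧
      (∀ y : Fin 3, (∃ x, φ₁ x = y) ∨ (∃ x, φ₂ x = y)) ∧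
      ¬ Function.Surjective φ₁ ∧ ¬ Function.Surjective φ₂ ∧
      (∃ (x₁ x₂ : X), φ₁ x₁ ≤ φ₂ x₂ ∨ φ₂ x₂ ≤ φ₁ x₁) := by
  classical
  have hm0 : m % 2 = 0 := Nat.even_iff.mp hmeven
  -- g^[m] fixes everything
  have hperiodic : ∀ x : X, gX^[m] x = x := by
    intro x
    obtain ⟨n, rfl⟩ := horbit x
    rw [← Function.iterate_add_apply, Nat.add_comm, Function.iterate_add_apply, hper]
  have hqall : ∀ (q : ℕ) (x : X), gX^[m * q] x = x := by
    intro q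
    induction q with
    | zero => simp
    | succ n ih =>
        intro x
        rw [Nat.mul_succ, Function.iterate_add_apply, hperiodic, ih]
  have hsurj : Function.Surjective gX := by
    intro x
    refine ⟨gX^[m-1] x, ?_⟩
    have h1 : gX^[1] (gX^[m-1] x) = gX^[m] x := by
      rw [← Function.iterate_add_apply]
      congr 1; omega
    simpa using h1.trans (hperiodic x)
  have ginj : Function.Injective gX := Finite.injective_iff_surjective.mpr hsurj
  have giterinj : ∀ k : ℕ, Function.Injective (gX^[k]) :=
    fun k => Function.Injective.iterate ginj k
  -- divisibility for a
  have hdvd_a : ∀ k : ℕ, gX^[k] a = a → m ∣ k := by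
    intro k hk
    have hk2 : gX^[k % m] a = a := by
      have h3 : gX^[k % m + m * (k / m)] a = a := by
        rw [Nat.mod_add_div]; exact hk
      rwa [Function.iterate_add_apply, hqall] at h3
    have hlt : k % m < m := Nat.mod_lt _ (by omega)
    have h0 : k % m = 0 := by
      by_contra h
      exact hleast (k % m) (Nat.pos_of_ne_zero h) hlt hk2
    exact Nat.dvd_of_mod_eq_zero h0
  -- a minimal element b
  obtain ⟨b, -, hbmin⟩ : ∃ b ∈ (Finset.univ : Finset X), ∀ x ∈ (Finset.univ : Finset X), ¬ x < b := by
    obtain ⟨b, hb⟩ := Finset.exists_minimal (s := (Finset.univ : Finset X)) ⟨a, Finset.mem_univ a⟩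
    exact ⟨b, hb.1, fun x hx hlt => hlt.not_ge (hb.2 hx hlt.le)⟩
  obtain ⟨n₀, hn₀⟩ := horbit b
  -- divisibility for b
  have hdvd_b : ∀ k : ℕ, gX^[k] b = b → m ∣ k := by
    intro k hk
    apply hdvd_a
    apply giterinj n₀
    calc gX^[n₀] (gX^[k] a)
        = gX^[k] (gX^[n₀] a) := by
          rw [← Function.iterate_add_apply, Nat.add_comm, Function.iterate_add_apply]
      _ = gX^[n₀] a := by rw [hn₀, hk]
  -- parity lemma
  have hpar : ∀ i j : ℕ, gX^[i] b = gX^[j] b → i % 2 = j % 2 := by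
    have key : ∀ i j : ℕ, i ≤ j → gX^[i] b = gX^[j] b → i % 2 = j % 2 := by
      intro i j hij h
      have hd : gX^[j - i] b = b := by
        apply giterinj i
        have h2 : gX^[i] (gX^[j-i] b) = gX^[j] b := by
          rw [← Function.iterate_add_apply]; congr 1; omega
        rw [h2, ← h]
      obtain ⟨c, hc⟩ := hdvd_b _ hd
      have : Even (m * c) := hmeven.mul_right c
      have := Nat.even_iff.mp this
      omega
    intro i j h
    rcases le_total i j with hij | hij
    · exact key i j hij h
    · exact (key j i hij h.symm).symm
  -- orbit of b covers X
  have horbitb : ∀ x : X, ∃ n : ℕ, gX^[n] b = x := by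
    intro x
    obtain ⟨k, rfl⟩ := horbit x
    have ha : gX^[m * (n₀ + 1) - n₀] b = a := by
      rw [← hn₀, ← Function.iterate_add_apply]
      have h4 : m * (n₀ + 1) - n₀ + n₀ = m * (n₀ + 1) := by
        have : n₀ ≤ m * (n₀ + 1) := by nlinarith
        omega
      rw [h4, hqall]
    exact ⟨k + (m * (n₀ + 1) - n₀), by
      rw [Function.iterate_add_apply, ha]⟩
  -- index function
  set f : X → ℕ := fun x => (horbitb x).choose with hf_def
  have hf : ∀ x : X, gX^[f x] b = x := fun x => (horbitb x).choose_spec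
  set φ₁ : X → Fin 3 := fun x => if Even (f x) then 0 else 2 with hφ₁
  set φ₂ : X → Fin 3 := fun _ => 1 with hφ₂
  set gY : Fin 3 → Fin 3 := ![2, 1, 0] with hgY
  -- alternating order lemma
  have hiter : ∀ k : ℕ, ∀ x y : X, x ≤ y →
      (Even k → gX^[k] x ≤ gX^[k] y) ∧ (¬ Even k → gX^[k] y ≤ gX^[k] x) := by
    intro k
    induction k with
    | zero =>
        intro x y h
        exact ⟨fun _ => by simpa using h, fun h' => absurd Even.zero h'⟩
    | succ n ih =>
        intro x y h
        have h' : gX y ≤ gX x := hg x y h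
        have := ih (gX y) (gX x) h'
        constructor
        · intro he
          have hn : ¬ Even n := by simp [Nat.even_add_one] at he; simpa using he
          have := this.2 hn
          simpa [Function.iterate_succ_apply] using this
        · intro he
          have hn : Even n := by
            rcases Nat.even_or_odd n with h1 | h1
            · exact h1
            · exact absurd (by simpa [Nat.even_add_one] using h1.add_one) he
          have := this.1 hn
          simpa [Function.iterate_succ_apply] using this
  -- parity of f at basic points
  have hfb : f b % 2 = 0 := by
    have : gX^[f b] b = gX^[0] b := by simpa using hf b
    simpa using hpar _ 0 this
  have hfgb : f (gX b) % 2 = 1 := by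
    have : gX^[f (gX b)] b = gX^[1] b := by simpa using hf (gX b)
    simpa using hpar _ 1 this
  have hφ₁b : φ₁ b = 0 := by
    simp only [hφ₁]
    rw [if_pos (Nat.even_iff.mpr hfb)]
  have hφ₁gb : φ₁ (gX b) = 2 := by
    simp only [hφ₁]
    rw [if_neg (by simp [Nat.even_iff, hfgb])]
  -- monotonicity of φ₁
  have hmono : Monotone φ₁ := by
    intro x y hxy
    by_cases hx : Even (f x)
    · simp only [hφ₁, if_pos hx]
      exact Fin.zero_le _
    · have hy : ¬ Even (f y) := by
        intro hy
        -- derive contradiction with minimality of b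
        set i := f x with hi
        set j := f y with hj
        set N := m * (i + 1) - i with hN
        have hiN : i ≤ m * (i + 1) := by nlinarith
        have hNi : N + i = m * (i + 1) := by omega
        have hNodd : ¬ Even N := by
          have hx' := Nat.even_iff.not.mp hx
          have h8 : (m * (i + 1)) % 2 = 0 := Nat.even_iff.mp (hmeven.mul_right (i + 1))
          rw [Nat.even_iff]
          omega
        have hNx : gX^[N] x = b := by
          rw [← hf x, ← Function.iterate_add_apply, hNi, hqall]
        have hle : gX^[N] y ≤ b := by
          have := (hiter N x y hxy).2 hNodd
          rwa [hNx] at this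
        have heq : gX^[N] y = b := by
          rcases lt_or_eq_of_le hle with h1 | h1
          · exact absurd h1 (hbmin _ (Finset.mem_univ _))
          · exact h1
        have hNy : gX^[N + j] b = b := by
          rw [Function.iterate_add_apply, hf y, heq]
        obtain ⟨c, hc⟩ := hdvd_b _ hNy
        have hev : Even (m * c) := hmeven.mul_right c
        have h5 := Nat.even_iff.mp hev
        have h6 := Nat.even_iff.not.mp hNodd
        have h7 := Nat.even_iff.mp hy
        omega
      simp only [hφ₁, if_neg hx, if_neg hy]
      exact le_refl _
  -- commuting property of φ₁
  have hcomm : ∀ x : X, φ₁ (gX x) = gY (φ₁ x) := by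
    intro x
    have h1 : gX^[f (gX x)] b = gX^[f x + 1] b := by
      rw [hf (gX x), Function.iterate_succ_apply', hf x]
    have h2 := hpar _ _ h1
    by_cases hx : Even (f x)
    · have hgx : ¬ Even (f (gX x)) := by
        rw [Nat.even_iff] at *; omega
      simp only [hφ₁, hgY, if_pos hx, if_neg hgx]
      decide
    · have hgx : Even (f (gX x)) := by
        rw [Nat.even_iff] at *; omega
      simp only [hφ₁, hgY, if_neg hx, if_pos hgx]
      decide
  refine ⟨gY, φ₁, φ₂, by decide, by decide, by decide, by decide, hmono,
    monotone_const, hcomm, fun x => rfl, ?_, ?_, ?_, ⟨b, a, Or.inl ?_⟩⟩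
  · intro y
    fin_cases y
    · exact Or.inl ⟨b, hφ₁b⟩
    · exact Or.inr ⟨a, rfl⟩
    · exact Or.inl ⟨gX b, hφ₁gb⟩
  · intro hs
    obtain ⟨x, hx⟩ := hs 1
    by_cases h : Even (f x)
    · rw [hφ₁] at hx; simp only [if_pos h] at hx; exact absurd hx (by decide)
    · rw [hφ₁] at hx; simp only [if_neg h] at hx; exact absurd hx (by decide)
  · intro hs
    obtain ⟨x, hx⟩ := hs 0
    simp only [hφ₂] at hx
    exact absurd hx (by decide)
  · rw [hφ₁b]; exact Fin.zero_le _
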